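/- In the unweighted diamond graph D_n, the closed ball of radius 1 centered at the bottom vertex contains exactly 2^n + 1 vertices, and every subset of this ball of diameter at most 1 contains at most 2 vertices. -/

import Mathlib

/-- A graph given by a set of oriented edges. -/
structure EGraph where
  V : Type
  E : Type
  src : E → V
  tgt : E → V

/-- The diamond graphs `D_n`: `D_0` is a single edge, and `D_{n+1}` is obtained from
`D_n` by replacing each edge `uv` by a quadrilateral `u, a, v, b` (two new vertices
per edge, encoded as `(e, false)` and `(e, true)`). -/
def diamond : ℕ → EGraph
  | 0 => { V := Bool, E := Unit, src := fun _ => false, tgt := fun _ => true }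
  | n + 1 =>
    let G := diamond n
    { V := G.V ⊕ (G.E × Bool)
      E := G.E × Fin 4
      src := fun p =>
        if p.2.val = 0 then Sum.inl (G.src p.1)
        else if p.2.val = 1 then Sum.inr (p.1, false)
        else if p.2.val = 2 then Sum.inl (G.src p.1)
        else Sum.inr (p.1, true)
      tgt := fun p =>
        if p.2.val = 0 then Sum.inr (p.1, false)
        else if p.2.val = 1 then Sum.inl (G.tgt p.1)
        else if p.2.val = 2 then Sum.inr (p.1, true)
        else Sum.inl (G.tgt p.1) }

/-- The Laakso graphs `L_n`: `L_0` is a single edge, and `L_{n+1}` is obtained from `L_n`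
by replacing each edge `uv` by a copy of the pattern graph `L_1`.  In the pattern with
endpoints `u, v` and internal vertices `a = 0, b = 1, c = 2, d = 3` (encoded as
`(e, 0), …, (e, 3)`), the six edges are `u-a, a-b, a-c, b-d, c-d, d-v`. -/
def laakso : ℕ → EGraph
  | 0 => { V := Bool, E := Unit, src := fun _ => false, tgt := fun _ => true }
  | n + 1 =>
    let G := laakso n
    { V := G.V ⊕ (G.E × Fin 4)
      E := G.E × Fin 6
      src := fun p =>
        if p.2.val = 0 then Sum.inl (G.src p.1)
        else if p.2.val = 1 then Sum.inr (p.1, 0)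
        else if p.2.val = 2 then Sum.inr (p.1, 0)
        else if p.2.val = 3 then Sum.inr (p.1, 1)
        else if p.2.val = 4 then Sum.inr (p.1, 2)
        else Sum.inr (p.1, 3)
      tgt := fun p =>
        if p.2.val = 0 then Sum.inr (p.1, 0)
        else if p.2.val = 1 then Sum.inr (p.1, 1)
        else if p.2.val = 2 then Sum.inr (p.1, 2)
        else if p.2.val = 3 then Sum.inr (p.1, 3)
        else if p.2.val = 4 then Sum.inr (p.1, 3)
        else Sum.inl (G.tgt p.1) }

/-- The simple graph underlying an `EGraph`. -/
def EGraph.toSimpleGraph (G : EGraph) : SimpleGraph G.V where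
  Adj u v := u ≠ v ∧ ∃ e, (G.src e = u ∧ G.tgt e = v) ∨ (G.src e = v ∧ G.tgt e = u)
  symm := ⟨fun _ _ h => ⟨Ne.symm h.1, h.2.elim fun e he => ⟨e, he.symm⟩⟩⟩
  loopless := ⟨fun _ h => h.1 rfl⟩

/-- The unweighted diamond graph `D_n`; its shortest path metric is
`(DiamondGraph n).dist`. -/
abbrev DiamondGraph (n : ℕ) : SimpleGraph (diamond n).V := (diamond n).toSimpleGraph

/-- The unweighted Laakso graph `L_n`; its shortest path metric is
`(LaaksoGraph n).dist`. -/
abbrev LaaksoGraph (n : ℕ) : SimpleGraph (laakso n).V := (laakso n).toSimpleGraph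

/-- The bottom vertex of `D_n` (the vertex that evolved from the bottom vertex of `D_0`). -/
def diamondBottom : (n : ℕ) → (diamond n).V
  | 0 => false
  | n + 1 => Sum.inl (diamondBottom n)

lemma finVE (n : ℕ) : Finite (diamond n).V ∧ Finite (diamond n).E := by
  induction n with
  | zero => exact ⟨inferInstanceAs (Finite Bool), inferInstanceAs (Finite Unit)⟩
  | succ m ih =>
    haveI := ih.1; haveI := ih.2
    exact ⟨inferInstanceAs (Finite ((diamond m).V ⊕ ((diamond m).E × Bool))),
      inferInstanceAs (Finite ((diamond m).E × Fin 4))⟩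

instance (n : ℕ) : Finite (diamond n).V := (finVE n).1
instance (n : ℕ) : Finite (diamond n).E := (finVE n).2

lemma noloop : ∀ (n : ℕ) (e : (diamond n).E), (diamond n).src e ≠ (diamond n).tgt e
  | 0, _ => by simp [diamond]
  | n + 1, ⟨e, i⟩ => by obtain ⟨iv, hi⟩ := i; interval_cases iv <;> simp [diamond, show ((3:Fin 4):ℕ) = 3 from rfl]

lemma fin3 : ((3:Fin 4):ℕ) = 3 := rfl

def Inc (n : ℕ) : Set (diamond n).E :=
  {e | (diamond n).src e = diamondBottom n ∨ (diamond n).tgt e = diamondBottom n}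

lemma sides (n : ℕ) (e : (diamond (n+1)).E) :
    ((diamond (n+1)).src e).isLeft ≠ ((diamond (n+1)).tgt e).isLeft := by
  obtain ⟨e, ⟨iv, hi⟩⟩ := e
  interval_cases iv <;> simp [diamond, fin3]

lemma adj_isLeft {n : ℕ} {u v : (diamond (n+1)).V} (h : (DiamondGraph (n+1)).Adj u v) :
    u.isLeft ≠ v.isLeft := by
  obtain ⟨hne, e, ⟨rfl, rfl⟩ | ⟨rfl, rfl⟩⟩ := h
  · exact sides n e
  · exact (sides n e).symm

lemma adj_src (n : ℕ) (e : (diamond n).E) (b : Bool) :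
    (DiamondGraph (n+1)).Adj (Sum.inl ((diamond n).src e)) (Sum.inr (e, b)) := by
  refine ⟨Sum.inl_ne_inr, (e, if b then 2 else 0), ?_⟩
  cases b <;> simp [diamond, fin3]

lemma adj_tgt (n : ℕ) (e : (diamond n).E) (b : Bool) :
    (DiamondGraph (n+1)).Adj (Sum.inl ((diamond n).tgt e)) (Sum.inr (e, b)) := by
  refine ⟨Sum.inl_ne_inr, (e, if b then 3 else 1), ?_⟩
  cases b <;> simp [diamond, fin3]

lemma reach_inl {n : ℕ} {x y : (diamond n).V} (h : (DiamondGraph n).Reachable x y) :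
    (DiamondGraph (n+1)).Reachable (Sum.inl x) (Sum.inl y) := by
  obtain ⟨w⟩ := h
  induction w with
  | nil => rfl
  | cons h p ih =>
    refine SimpleGraph.Reachable.trans ?_ ih
    obtain ⟨hne, e, ⟨rfl, rfl⟩ | ⟨rfl, rfl⟩⟩ := h
    · exact (adj_src n e false).reachable.trans (adj_tgt n e false).reachable.symm
    · exact (adj_tgt n e false).reachable.trans (adj_src n e false).reachable.symm

lemma connected : ∀ n, (DiamondGraph n).Connected
  | 0 => by
    rw [SimpleGraph.connected_iff]; refine ⟨fun u v => ?_, ⟨false⟩⟩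
    have hadj : (DiamondGraph 0).Adj false true := ⟨Bool.false_ne_true, (), Or.inl ⟨rfl, rfl⟩⟩
    match u, v with
    | false, false => rfl
    | true, true => rfl
    | false, true => exact hadj.reachable
    | true, false => exact hadj.reachable.symm
  | n + 1 => by
    have hc := connected n
    have key : ∀ v : (diamond (n+1)).V, ∃ x : (diamond n).V,
        (DiamondGraph (n+1)).Reachable (Sum.inl x) v := by
      rintro (x | ⟨e, b⟩)
      · exact ⟨x, .refl _⟩
      · exact ⟨(diamond n).src e, (adj_src n e b).reachable⟩
    rw [SimpleGraph.connected_iff]; refine ⟨fun u v => ?_, ⟨diamondBottom (n+1)⟩⟩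
    obtain ⟨x, hx⟩ := key u
    obtain ⟨y, hy⟩ := key v
    exact hx.symm.trans ((reach_inl (hc.preconnected x y)).trans hy)

lemma dist_le_one_iff {n : ℕ} (u v : (diamond n).V) :
    (DiamondGraph n).dist u v ≤ 1 ↔ u = v ∨ (DiamondGraph n).Adj u v := by
  rw [Nat.le_one_iff_eq_zero_or_eq_one, (connected n).dist_eq_zero_iff,
    SimpleGraph.dist_eq_one_iff_adj]

lemma mem_inc {n : ℕ} {e : (diamond n).E} :
    e ∈ Inc n ↔ (diamond n).src e = diamondBottom n ∨ (diamond n).tgt e = diamondBottom n :=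
  Iff.rfl

lemma adj_bottom_iff (n : ℕ) (v : (diamond (n+1)).V) :
    (DiamondGraph (n+1)).Adj (diamondBottom (n+1)) v ↔
      ∃ e ∈ Inc n, ∃ b : Bool, v = Sum.inr (e, b) := by
  constructor
  · rintro ⟨hne, ⟨e, ⟨iv, hi⟩⟩, h⟩
    interval_cases iv <;>
      simp only [diamond, diamondBottom, fin3, show (diamondBottom (n+1) : (diamond (n+1)).V)
        = Sum.inl (diamondBottom n) from rfl] at h <;>
      simp at h <;>
      obtain ⟨h1, h2⟩ := h <;>
      first
        | exact ⟨e, Or.inl h1, _, h2.symm⟩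
        | exact ⟨e, Or.inr h2, _, h1.symm⟩
  · rintro ⟨e, he, b, rfl⟩
    rcases he with he | he
    · rw [show (diamondBottom (n+1) : (diamond (n+1)).V) = Sum.inl ((diamond n).src e) by
        rw [he]; rfl]
      exact adj_src n e b
    · rw [show (diamondBottom (n+1) : (diamond (n+1)).V) = Sum.inl ((diamond n).tgt e) by
        rw [he]; rfl]
      exact adj_tgt n e b

lemma pair_inj {α : Type} {β : Type} (b : β) : Function.Injective (fun a : α => (a, b)) :=
  fun _ _ h => (Prod.ext_iff.1 h).1

lemma disj_pair {α β : Type} {i j : β} (hij : i ≠ j) (A B : Set α) :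
    Disjoint ((fun a => (a, i)) '' A) ((fun a => (a, j)) '' B) := by
  rw [Set.disjoint_left]
  rintro _ ⟨a, _, rfl⟩ ⟨b, _, hEq⟩
  exact hij ((Prod.ext_iff.1 hEq).2).symm

lemma inc_ncard : ∀ n, (Inc n).ncard = 2 ^ n
  | 0 => by
    have : Inc 0 = Set.univ := by
      ext e
      exact iff_of_true (Or.inl rfl) trivial
    rw [this, Set.ncard_univ]
    haveI : Unique (diamond 0).E := inferInstanceAs (Unique Unit)
    exact Nat.card_unique
  | n + 1 => by
    set S : Set (diamond n).E := {e | (diamond n).src e = diamondBottom n} with hS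
    set T : Set (diamond n).E := {e | (diamond n).tgt e = diamondBottom n} with hT
    have hST : Disjoint S T := by
      rw [Set.disjoint_left]
      intro e heS heT
      exact noloop n e (heS.trans heT.symm)
    have hIncn : Inc n = S ∪ T := rfl
    have hdecomp : Inc (n+1) =
        (((fun e => (e, (0:Fin 4))) '' S) ∪ ((fun e => (e, (2:Fin 4))) '' S)) ∪
        (((fun e => (e, (1:Fin 4))) '' T) ∪ ((fun e => (e, (3:Fin 4))) '' T)) := by
      ext ⟨e, ⟨iv, hi⟩⟩
      constructor
      · rintro (h | h) <;> interval_cases iv <;>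
          simp only [diamond, diamondBottom, fin3,
            show (diamondBottom (n+1) : (diamond (n+1)).V)
              = Sum.inl (diamondBottom n) from rfl] at h <;>
          simp at h <;>
          first
            | exact Or.inl (Or.inl ⟨e, h, rfl⟩)
            | exact Or.inl (Or.inr ⟨e, h, rfl⟩)
            | exact Or.inr (Or.inl ⟨e, h, rfl⟩)
            | exact Or.inr (Or.inr ⟨e, h, rfl⟩)
      · rintro ((⟨a, ha, hEq⟩ | ⟨a, ha, hEq⟩) | (⟨a, ha, hEq⟩ | ⟨a, ha, hEq⟩)) <;>
          obtain ⟨rfl, h2⟩ := Prod.ext_iff.1 hEq <;>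
          rw [show (⟨iv, hi⟩ : Fin 4) = _ from h2.symm] <;>
          first
            | exact Or.inl (by simpa [diamond, diamondBottom, fin3, hS, hT] using ha)
            | exact Or.inr (by simpa [diamond, diamondBottom, fin3, hS, hT] using ha)
    change Set.ncard (α := (diamond n).E × Fin 4) (Inc (n+1)) = 2 ^ (n+1)
    rw [hdecomp, Set.ncard_union_eq (by
        refine Set.disjoint_union_left.2 ⟨?_, ?_⟩ <;>
        exact Set.disjoint_union_right.2 ⟨disj_pair (by decide) _ _, disj_pair (by decide) _ _⟩),
      Set.ncard_union_eq (disj_pair (by decide) _ _),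
      Set.ncard_union_eq (disj_pair (by decide) _ _),
      Set.ncard_image_of_injective _ (pair_inj _),
      Set.ncard_image_of_injective _ (pair_inj _),
      Set.ncard_image_of_injective _ (pair_inj _),
      Set.ncard_image_of_injective _ (pair_inj _)]
    have := inc_ncard n
    rw [hIncn, Set.ncard_union_eq hST] at this
    rw [pow_succ]
    omega

lemma diamond_ball_eq (n : ℕ) :
    {v : (diamond (n+1)).V | (DiamondGraph (n+1)).dist (diamondBottom (n+1)) v ≤ 1} =
    insert (diamondBottom (n+1))
      (((fun e => (Sum.inr (e, false) : (diamond (n+1)).V)) '' Inc n) ∪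
       ((fun e => (Sum.inr (e, true) : (diamond (n+1)).V)) '' Inc n)) := by
  ext v
  rw [Set.mem_setOf_eq, dist_le_one_iff, adj_bottom_iff]
  constructor
  · rintro (h | ⟨e, he, b, rfl⟩)
    · exact Or.inl h.symm
    · cases b
      · exact Or.inr (Or.inl ⟨e, he, rfl⟩)
      · exact Or.inr (Or.inr ⟨e, he, rfl⟩)
  · rintro (rfl | (⟨e, he, rfl⟩ | ⟨e, he, rfl⟩))
    · exact Or.inl rfl
    · exact Or.inr ⟨e, he, false, rfl⟩
    · exact Or.inr ⟨e, he, true, rfl⟩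

/-- In `D_n`, the closed ball of radius `1` centered at the bottom vertex
contains exactly `2^n + 1` vertices, and every subset of this ball of diameter at most `1`
contains at most `2` vertices. -/
theorem diamond_ball_at_bottom (n : ℕ) :
    ({v : (diamond n).V | (DiamondGraph n).dist (diamondBottom n) v ≤ 1}).ncard
        = 2 ^ n + 1 ∧
    ∀ S : Set (diamond n).V,
      S ⊆ {v : (diamond n).V | (DiamondGraph n).dist (diamondBottom n) v ≤ 1} →
      (∀ u ∈ S, ∀ v ∈ S, (DiamondGraph n).dist u v ≤ 1) →
      S.ncard ≤ 2 := by
  match n with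
  | 0 =>
    have hcard : ∀ s : Set (diamond 0).V, s.ncard ≤ 2 := by
      intro s
      calc s.ncard ≤ (Set.univ : Set (diamond 0).V).ncard :=
            Set.ncard_le_ncard (Set.subset_univ s) Set.finite_univ
        _ = 2 := by
            rw [Set.ncard_univ]
            show Nat.card Bool = 2
            rw [Nat.card_eq_fintype_card, Fintype.card_bool]
    constructor
    · have hadj : (DiamondGraph 0).Adj false true := ⟨Bool.false_ne_true, (), Or.inl ⟨rfl, rfl⟩⟩
      have huniv : {v : (diamond 0).V | (DiamondGraph 0).dist (diamondBottom 0) v ≤ 1}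
          = Set.univ := by
        ext v
        refine iff_of_true ?_ trivial
        rw [Set.mem_setOf_eq, dist_le_one_iff]
        match v with
        | false => exact Or.inl rfl
        | true => exact Or.inr hadj
      rw [huniv, Set.ncard_univ]
      show Nat.card Bool = 2 ^ 0 + 1
      rw [Nat.card_eq_fintype_card, Fintype.card_bool]
      norm_num
    · exact fun S _ _ => hcard S
  | m + 1 =>
    constructor
    · rw [diamond_ball_eq m]
      have hinj : ∀ b : Bool, Function.Injective
          (fun e => (Sum.inr (e, b) : (diamond (m+1)).V)) := by
        intro b x y h
        exact (Prod.ext_iff.1 (Sum.inr_injective h)).1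
      have hdisj : Disjoint
          ((fun e => (Sum.inr (e, false) : (diamond (m+1)).V)) '' Inc m)
          ((fun e => (Sum.inr (e, true) : (diamond (m+1)).V)) '' Inc m) := by
        rw [Set.disjoint_left]
        rintro _ ⟨a, _, rfl⟩ ⟨b, _, h⟩
        simp at h
      have hmem : diamondBottom (m+1) ∉
          (((fun e => (Sum.inr (e, false) : (diamond (m+1)).V)) '' Inc m) ∪
           ((fun e => (Sum.inr (e, true) : (diamond (m+1)).V)) '' Inc m)) := by
        rintro (⟨a, _, h⟩ | ⟨a, _, h⟩) <;> exact Sum.inr_ne_inl h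
      erw [Set.ncard_insert_of_notMem hmem, Set.ncard_union_eq hdisj,
        Set.ncard_image_of_injective _ (hinj false),
        Set.ncard_image_of_injective _ (hinj true), inc_ncard m, pow_succ]
      ring
    · intro S hsub hdiam
      by_contra hcon
      push_neg at hcon
      obtain ⟨a, ha, b, hb, c, hc, hab, hac, hbc⟩ :=
        (Set.two_lt_ncard (Set.toFinite S)).1 hcon
      have hadj : ∀ u ∈ S, ∀ v ∈ S, u ≠ v → (DiamondGraph (m+1)).Adj u v := by
        intro u hu v hv hne
        have h := hdiam u hu v hv
        rw [dist_le_one_iff] at h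
        tauto
      have h1 := adj_isLeft (hadj a ha b hb hab)
      have h2 := adj_isLeft (hadj a ha c hc hac)
      have h3 := adj_isLeft (hadj b hb c hc hbc)
      have key : ∀ x y z : Bool, x ≠ y → x ≠ z → y ≠ z → False := by decide
      exact key _ _ _ h1 h2 h3
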